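/- Let D be a contractive distance on two-qubit density matrices. Then for all c1, c3 ∈ [-1,1], D(ρ(c1, -c1·c3, c3), ρ(0, 0, c3)) = D(ρ(c1, 0, 0), ρ(0, 0, 0)). (Second translational invariance property of Theorem 1: the distance from a Bell-diagonal state on the phase-flip freezing surface to its projection onto the c3-axis is independent of c3.) -/

import Mathlib

open Matrix Kronecker
open scoped ComplexOrder

noncomputable section

/-- 2×2 complex matrices (single-qubit operators). -/
abbrev Mat2 := Matrix (Fin 2) (Fin 2) ℂ

/-- 4×4 complex matrices (two-qubit operators), indexed by `Fin 2 × Fin 2`. -/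
abbrev Mat4 := Matrix (Fin 2 × Fin 2) (Fin 2 × Fin 2) ℂ

/-- Pauli matrix σ₁ (x). -/
def σ1 : Mat2 := !![0, 1; 1, 0]

/-- Pauli matrix σ₂ (y). -/
def σ2 : Mat2 := !![0, -Complex.I; Complex.I, 0]

/-- Pauli matrix σ₃ (z). -/
def σ3 : Mat2 := !![1, 0; 0, -1]

/-- The Bell-diagonal state ρ(c1,c2,c3) = (1/4)(I₄ + c1 σ₁⊗σ₁ + c2 σ₂⊗σ₂ + c3 σ₃⊗σ₃). -/
def BD (c1 c2 c3 : ℝ) : Mat4 :=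
  (1 / 4 : ℂ) • ((1 : Mat4) + (c1 : ℂ) • (σ1 ⊗ₖ σ1) + (c2 : ℂ) • (σ2 ⊗ₖ σ2)
    + (c3 : ℂ) • (σ3 ⊗ₖ σ3))

/-- A two-qubit density matrix: positive semidefinite with unit trace. -/
def IsDensityMatrix (ρ : Mat4) : Prop := ρ.PosSemidef ∧ ρ.trace = 1

/-- A CPTP map given by finitely many Kraus operators. -/
def IsCPTP (Λ : Mat4 → Mat4) : Prop :=
  ∃ (n : ℕ) (K : Fin n → Mat4),
    (∑ i, (K i)ᴴ * K i) = 1 ∧ ∀ X, Λ X = ∑ i, K i * X * (K i)ᴴ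

/-- A distance `D` is contractive if it contracts under every CPTP map. -/
def Contractive (D : Mat4 → Mat4 → ℝ) : Prop :=
  ∀ Λ : Mat4 → Mat4, IsCPTP Λ → ∀ ρ σ : Mat4,
    IsDensityMatrix ρ → IsDensityMatrix σ → D (Λ ρ) (Λ σ) ≤ D ρ σ

/-- A distance `D` is invariant under transposition. -/
def TransposeInvariant (D : Mat4 → Mat4 → ℝ) : Prop :=
  ∀ ρ σ : Mat4, IsDensityMatrix ρ → IsDensityMatrix σ → D ρᵀ σᵀ = D ρ σ

/-- A distance `D` is jointly convex. -/
def JointlyConvex (D : Mat4 → Mat4 → ℝ) : Prop :=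
  ∀ q : ℝ, 0 ≤ q → q ≤ 1 → ∀ ρ σ τ ς : Mat4,
    IsDensityMatrix ρ → IsDensityMatrix σ → IsDensityMatrix τ → IsDensityMatrix ς →
    D (q • ρ + (1 - q) • σ) (q • τ + (1 - q) • ς) ≤ q * D ρ τ + (1 - q) * D σ ς

/-- A classical-classical two-qubit state: ∑ᵢⱼ pᵢⱼ |aᵢ⟩⟨aᵢ| ⊗ |bⱼ⟩⟨bⱼ| with (pᵢⱼ) a
probability distribution and {aᵢ}, {bⱼ} orthonormal bases of ℂ². -/
def IsClassical (χ : Mat4) : Prop :=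
  ∃ (p : Fin 2 → Fin 2 → ℝ) (a b : Fin 2 → Fin 2 → ℂ),
    (∀ i j, 0 ≤ p i j) ∧ (∑ i, ∑ j, p i j = 1) ∧
    (∀ i i', ∑ k, (starRingEnd ℂ) (a i k) * a i' k = if i = i' then 1 else 0) ∧
    (∀ j j', ∑ k, (starRingEnd ℂ) (b j k) * b j' k = if j = j' then 1 else 0) ∧
    χ = ∑ i, ∑ j, (p i j : ℂ) •
      (Matrix.vecMulVec (a i) (star (a i)) ⊗ₖ Matrix.vecMulVec (b j) (star (b j)))

/-- Membership in the tetrahedron of Bell-diagonal states. -/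
def InTetra (c : ℝ × ℝ × ℝ) : Prop :=
  c ∈ convexHull ℝ
    ({((1 : ℝ), (-1 : ℝ), (1 : ℝ)), ((-1 : ℝ), (1 : ℝ), (1 : ℝ)),
      ((1 : ℝ), (1 : ℝ), (-1 : ℝ)), ((-1 : ℝ), (-1 : ℝ), (-1 : ℝ))} : Set (ℝ × ℝ × ℝ))

/-- Geometric discord: distance to the set of classical states. -/
def QD (D : Mat4 → Mat4 → ℝ) (ρ : Mat4) : ℝ :=
  sInf {x : ℝ | ∃ χ : Mat4, IsClassical χ ∧ x = D ρ χ}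

/-- The Pauli matrices, indexed. -/
def pauli : Fin 3 → Mat2 := ![σ1, σ2, σ3]

section FreezingAux

/-- signs for the Bell-basis eigenvalues -/
def sgn : Fin 2 → ℝ := ![1, -1]

/-- unnormalized Bell vectors -/
def uv (i j : Fin 2) : Fin 2 × Fin 2 → ℂ := fun p =>
  if p.2 = p.1 + j then (if p.1 = 1 ∧ i = 1 then -1 else 1) else 0

set_option maxHeartbeats 4000000 in
lemma bd_spectral (c1 c3 : ℝ) :
    BD c1 (-(c1*c3)) c3 = ∑ i, ∑ j, (((1 + sgn i * c1) * (1 + sgn j * c3) / 8 : ℝ) : ℂ) •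
      Matrix.vecMulVec (uv i j) (star (uv i j)) := by
  ext ⟨a,b⟩ ⟨c,d⟩
  simp only [BD, uv, sgn, Fin.sum_univ_two, Matrix.vecMulVec_apply,
    Matrix.sum_apply, Matrix.smul_apply, Matrix.add_apply, Matrix.one_apply,
    Matrix.kroneckerMap_apply, Pi.star_apply, σ1, σ2, σ3, smul_eq_mul]
  fin_cases a <;> fin_cases b <;> fin_cases c <;> fin_cases d <;>
    all_goals (simp [Prod.ext_iff] <;> push_cast <;> ring_nf <;>
      simp [Complex.ext_iff] <;> ring)

lemma outer_psd (v : Fin 2 × Fin 2 → ℂ) : (Matrix.vecMulVec v (star v)).PosSemidef := by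
  rw [show Matrix.vecMulVec v (star v) = Matrix.replicateCol Unit v * (Matrix.replicateCol Unit v)ᴴ by
    rw [Matrix.conjTranspose_replicateCol, Matrix.vecMulVec_eq Unit]]
  exact Matrix.posSemidef_self_mul_conjTranspose _

lemma smul_psd {r : ℝ} (hr : 0 ≤ r) {M : Mat4} (h : M.PosSemidef) :
    ((r : ℂ) • M).PosSemidef := by
  constructor
  · unfold Matrix.IsHermitian
    rw [Matrix.conjTranspose_smul, h.1]
    congr 1
    simp [Complex.conj_ofReal]
  · intro x
    have := mul_nonneg (show (0:ℂ) ≤ (r:ℂ) by exact_mod_cast hr) (h.2 x)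
    simp only [Matrix.smul_apply, smul_eq_mul, Finsupp.mul_sum, mul_assoc,
      mul_left_comm (r : ℂ)] at this ⊢
    exact this

lemma bd_trace (c1 c2 c3 : ℝ) : (BD c1 c2 c3).trace = 1 := by
  simp [BD, Matrix.trace, Matrix.diag, Fintype.sum_prod_type, Fin.sum_univ_two,
    σ1, σ2, σ3, Matrix.one_apply]
  ring

set_option maxHeartbeats 4000000 in
lemma bd_dm {c1 c3 : ℝ} (hc1 : c1 ∈ Set.Icc (-1:ℝ) 1) (hc3 : c3 ∈ Set.Icc (-1:ℝ) 1) :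
    IsDensityMatrix (BD c1 (-(c1*c3)) c3) := by
  obtain ⟨h1, h2⟩ := hc1; obtain ⟨h3, h4⟩ := hc3
  refine ⟨?_, bd_trace _ _ _⟩
  rw [bd_spectral]
  have key : ∀ i j : Fin 2, ((((1 + sgn i * c1) * (1 + sgn j * c3) / 8 : ℝ) : ℂ) •
      Matrix.vecMulVec (uv i j) (star (uv i j))).PosSemidef := by
    intro i j
    apply smul_psd _ (outer_psd _)
    fin_cases i <;> fin_cases j <;> simp [sgn] <;> nlinarith
  simp only [Fin.sum_univ_two]
  exact (((key 0 0).add (key 0 1)).add ((key 1 0).add (key 1 1)))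

/-- Kraus operators of the reverse channel (kills c2 and c3, keeps c1). -/
def W : Fin 4 → Mat4 := ![(1/2 : ℂ) • 1, (1/2 : ℂ) • (σ1 ⊗ₖ 1),
  (1/2 : ℂ) • ((1 : Mat2) ⊗ₖ σ1), (1/2 : ℂ) • (σ1 ⊗ₖ σ1)]

set_option maxHeartbeats 4000000 in
lemma W_sum : (∑ i, (W i)ᴴ * W i) = (1 : Mat4) := by
  ext ⟨a,b⟩ ⟨c,d⟩
  simp only [Fin.sum_univ_four, W, Matrix.cons_val_zero, Matrix.cons_val_one, Matrix.head_cons,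
    Matrix.cons_val_two, Matrix.cons_val_three, Matrix.tail_cons, Matrix.conjTranspose_smul,
    Matrix.smul_mul, Matrix.mul_smul, Matrix.add_apply, Matrix.smul_apply,
    Matrix.mul_apply, Fintype.sum_prod_type, Fin.sum_univ_two, Matrix.kroneckerMap_apply,
    Matrix.conjTranspose_apply, Matrix.one_apply, σ1, smul_eq_mul]
  fin_cases a <;> fin_cases b <;> fin_cases c <;> fin_cases d <;>
    all_goals (simp [Prod.ext_iff] <;> ring_nf <;> simp [Complex.ext_iff] <;> ring)

set_option maxHeartbeats 4000000 in
lemma W_act (a b c : ℝ) : (∑ i, W i * BD a b c * (W i)ᴴ) = BD a 0 0 := by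
  ext ⟨x,y⟩ ⟨z,w⟩
  simp only [Fin.sum_univ_four, W, BD, Matrix.cons_val_zero, Matrix.cons_val_one, Matrix.head_cons,
    Matrix.cons_val_two, Matrix.cons_val_three, Matrix.tail_cons, Matrix.conjTranspose_smul,
    Matrix.smul_mul, Matrix.mul_smul, Matrix.add_apply, Matrix.smul_apply,
    Matrix.mul_apply, Fintype.sum_prod_type, Fin.sum_univ_two, Matrix.kroneckerMap_apply,
    Matrix.conjTranspose_apply, Matrix.one_apply, σ1, σ2, σ3, smul_eq_mul]
  fin_cases x <;> fin_cases y <;> fin_cases z <;> fin_cases w <;>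
    all_goals (simp [Prod.ext_iff] <;> ring_nf <;> simp [Complex.ext_iff] <;> ring)

/-- Kraus operators of the forward channel. -/
def Kr (c3 : ℝ) (j' i j : Fin 2) : Mat4 :=
  (Real.sqrt ((1 + sgn j' * c3) / 2) : ℂ) •
    ((1/2 : ℂ) • Matrix.vecMulVec (uv i j') (star (uv i j)))

lemma sandwich (b : ℝ) (hb : 0 ≤ b) (N X : Mat4) :
    ((Real.sqrt b : ℂ) • N) * X * ((Real.sqrt b : ℂ) • N)ᴴ = (b : ℂ) • (N * X * Nᴴ) := by
  rw [Matrix.conjTranspose_smul]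
  rw [Matrix.smul_mul, Matrix.smul_mul, Matrix.mul_smul, smul_smul]
  congr 1
  rw [Complex.star_def, Complex.conj_ofReal, ← Complex.ofReal_mul, Real.mul_self_sqrt hb]

lemma sandwich' (b : ℝ) (hb : 0 ≤ b) (N : Mat4) :
    ((Real.sqrt b : ℂ) • N)ᴴ * ((Real.sqrt b : ℂ) • N) = (b : ℂ) • (Nᴴ * N) := by
  rw [Matrix.conjTranspose_smul]
  rw [Matrix.smul_mul, Matrix.mul_smul, smul_smul]
  congr 1
  rw [Complex.star_def, Complex.conj_ofReal, ← Complex.ofReal_mul, Real.mul_self_sqrt hb]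

lemma coef_nonneg {c3 : ℝ} (hc3 : c3 ∈ Set.Icc (-1:ℝ) 1) (j' : Fin 2) :
    0 ≤ (1 + sgn j' * c3) / 2 := by
  obtain ⟨h1, h2⟩ := hc3; fin_cases j' <;> simp [sgn] <;> linarith

set_option maxHeartbeats 4000000 in
lemma Kr_sum {c3 : ℝ} (hc3 : c3 ∈ Set.Icc (-1:ℝ) 1) :
    (∑ j', ∑ i, ∑ j, (Kr c3 j' i j)ᴴ * Kr c3 j' i j) = (1 : Mat4) := by
  have h := coef_nonneg hc3
  simp only [Kr, Fin.sum_univ_two]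
  rw [sandwich' _ (h 0), sandwich' _ (h 0), sandwich' _ (h 0), sandwich' _ (h 0),
      sandwich' _ (h 1), sandwich' _ (h 1), sandwich' _ (h 1), sandwich' _ (h 1)]
  ext ⟨a,b⟩ ⟨c,d⟩
  simp only [Matrix.add_apply, Matrix.smul_apply, Matrix.conjTranspose_smul,
    Matrix.smul_mul, Matrix.mul_smul, Matrix.mul_apply, Fintype.sum_prod_type,
    Fin.sum_univ_two, Matrix.vecMulVec_apply, Matrix.conjTranspose_apply,
    Matrix.one_apply, Pi.star_apply, uv, sgn, smul_eq_mul]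
  fin_cases a <;> fin_cases b <;> fin_cases c <;> fin_cases d <;>
    all_goals (simp [Prod.ext_iff] <;> push_cast <;> ring_nf <;>
      simp [Complex.ext_iff] <;> ring)

set_option maxHeartbeats 4000000 in
lemma Kr_act {c3 : ℝ} (hc3 : c3 ∈ Set.Icc (-1:ℝ) 1) (c1 : ℝ) :
    (∑ j', ∑ i, ∑ j, Kr c3 j' i j * BD c1 0 0 * (Kr c3 j' i j)ᴴ) = BD c1 (-(c1*c3)) c3 := by
  have h := coef_nonneg hc3
  simp only [Kr, Fin.sum_univ_two]
  rw [sandwich _ (h 0), sandwich _ (h 0), sandwich _ (h 0), sandwich _ (h 0),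
      sandwich _ (h 1), sandwich _ (h 1), sandwich _ (h 1), sandwich _ (h 1)]
  ext ⟨a,b⟩ ⟨c,d⟩
  simp only [BD, Matrix.add_apply, Matrix.smul_apply, Matrix.conjTranspose_smul,
    Matrix.smul_mul, Matrix.mul_smul, Matrix.mul_apply, Fintype.sum_prod_type,
    Fin.sum_univ_two, Matrix.vecMulVec_apply, Matrix.conjTranspose_apply,
    Matrix.one_apply, Pi.star_apply, Matrix.kroneckerMap_apply, σ1, σ2, σ3,
    uv, sgn, smul_eq_mul]
  fin_cases a <;> fin_cases b <;> fin_cases c <;> fin_cases d <;>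
    all_goals (simp [Prod.ext_iff] <;> push_cast <;> ring_nf <;>
      simp [Complex.ext_iff] <;> ring)

/-- Flattening a triply-indexed family into `Fin 8`. -/
def Kf (c3 : ℝ) : Fin 8 → Mat4 :=
  ![Kr c3 0 0 0, Kr c3 0 0 1, Kr c3 0 1 0, Kr c3 0 1 1,
    Kr c3 1 0 0, Kr c3 1 0 1, Kr c3 1 1 0, Kr c3 1 1 1]

lemma sum8 (c3 : ℝ) (g : Mat4 → Mat4) :
    (∑ m : Fin 8, g (Kf c3 m)) = ∑ j', ∑ i, ∑ j, g (Kr c3 j' i j) := by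
  simp [Kf, Fin.sum_univ_eight, Fin.sum_univ_two]
  abel

end FreezingAux

/-- Second translational invariance property of Theorem 1. -/
theorem freezing_translation_invariance_c3
    (D : Mat4 → Mat4 → ℝ) (hD : Contractive D)
    (c1 c3 : ℝ) (hc1 : c1 ∈ Set.Icc (-1 : ℝ) 1) (hc3 : c3 ∈ Set.Icc (-1 : ℝ) 1) :
    D (BD c1 (-(c1 * c3)) c3) (BD 0 0 c3) = D (BD c1 0 0) (BD 0 0 0) := by
  have h0 : (0:ℝ) ∈ Set.Icc (-1:ℝ) 1 := by constructor <;> norm_num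
  have d1 : IsDensityMatrix (BD c1 (-(c1*c3)) c3) := bd_dm hc1 hc3
  have d2 : IsDensityMatrix (BD 0 0 c3) := by
    have := bd_dm h0 hc3
    rwa [show (-((0:ℝ)*c3)) = 0 by ring] at this
  have d3 : IsDensityMatrix (BD c1 0 0) := by
    have := bd_dm hc1 h0
    rwa [show (-(c1*(0:ℝ))) = 0 by ring] at this
  have d4 : IsDensityMatrix (BD 0 0 0) := by
    have := bd_dm h0 h0
    rwa [show (-((0:ℝ)*(0:ℝ))) = 0 by ring] at this
  apply le_antisymm
  · -- forward channel maps (BD c1 0 0, BD 0 0 0) to (BD c1 (-(c1 c3)) c3, BD 0 0 c3)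
    have hcptp : IsCPTP (fun X => ∑ m : Fin 8, Kf c3 m * X * (Kf c3 m)ᴴ) := by
      refine ⟨8, Kf c3, ?_, fun X => rfl⟩
      rw [show (∑ m : Fin 8, (Kf c3 m)ᴴ * Kf c3 m)
          = ∑ m : Fin 8, (fun A => Aᴴ * A) (Kf c3 m) from rfl,
        sum8 c3 (fun A => Aᴴ * A)]
      exact Kr_sum hc3
    have h1 := hD _ hcptp (BD c1 0 0) (BD 0 0 0) d3 d4
    have e1 : (∑ m : Fin 8, Kf c3 m * BD c1 0 0 * (Kf c3 m)ᴴ) = BD c1 (-(c1*c3)) c3 := by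
      rw [show (∑ m : Fin 8, Kf c3 m * BD c1 0 0 * (Kf c3 m)ᴴ)
          = ∑ m : Fin 8, (fun A => A * BD c1 0 0 * Aᴴ) (Kf c3 m) from rfl,
        sum8 c3 (fun A => A * BD c1 0 0 * Aᴴ)]
      exact Kr_act hc3 c1
    have e2 : (∑ m : Fin 8, Kf c3 m * BD 0 0 0 * (Kf c3 m)ᴴ) = BD 0 0 c3 := by
      rw [show (∑ m : Fin 8, Kf c3 m * BD 0 0 0 * (Kf c3 m)ᴴ)
          = ∑ m : Fin 8, (fun A => A * BD 0 0 0 * Aᴴ) (Kf c3 m) from rfl,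
        sum8 c3 (fun A => A * BD 0 0 0 * Aᴴ)]
      have := Kr_act hc3 0
      rwa [show (-((0:ℝ)*c3)) = 0 by ring] at this
    simpa only [e1, e2] using h1
  · -- reverse channel maps (BD c1 (-(c1 c3)) c3, BD 0 0 c3) to (BD c1 0 0, BD 0 0 0)
    have hcptp : IsCPTP (fun X => ∑ i : Fin 4, W i * X * (W i)ᴴ) :=
      ⟨4, W, W_sum, fun X => rfl⟩
    have h1 := hD _ hcptp (BD c1 (-(c1*c3)) c3) (BD 0 0 c3) d1 d2
    rw [W_act, W_act] at h1
    exact h1
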